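/- Let s and t be coprime positive integers and n, m integers with 0 < n < s and 0 < m < t. For every positive integer N, Σ_{k=0}^{N−1} ( exp( πi(2stk − nt − ms)²/(2stN) ) − exp( πi(2stk + nt − ms)²/(2stN) ) ) = 0. -/

import Mathlib

open Complex Finset

/-- Any positive `N` splits as `N1 * N2` with `N1` coprime to `S`, `N2` coprime to `T`,
    provided `S` and `T` are coprime. -/
lemma split_coprime : ∀ N : ℕ, 0 < N → ∀ S T : ℕ, Nat.Coprime S T →
    ∃ N1 N2 : ℕ, N = N1 * N2 ∧ Nat.Coprime N1 N2 ∧ Nat.Coprime N1 S ∧ Nat.Coprime N2 T := by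
  intro N
  induction N using Nat.strong_induction_on with
  | _ N ih =>
    intro hN S T hST
    by_cases hg : Nat.gcd N S = 1
    · exact ⟨N, 1, (Nat.mul_one N).symm, Nat.coprime_one_right N, hg, Nat.coprime_one_left T⟩
    · have hgdvdN : Nat.gcd N S ∣ N := Nat.gcd_dvd_left N S
      have hgdvdS : Nat.gcd N S ∣ S := Nat.gcd_dvd_right N S
      have hgpos : 0 < Nat.gcd N S := Nat.gcd_pos_of_pos_left S hN
      have hg1 : 1 < Nat.gcd N S := lt_of_le_of_ne hgpos (Ne.symm hg)
      obtain ⟨N', hN'⟩ := hgdvdN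
      have hN'pos : 0 < N' := by
        rcases Nat.eq_zero_or_pos N' with h | h
        · subst h; simp at hN'; omega
        · exact h
      have hlt : N' < N := by
        calc N' < Nat.gcd N S * N' := by
              exact lt_mul_of_one_lt_left hN'pos hg1
          _ = N := hN'.symm
      obtain ⟨N1, N2, h1, h2, h3, h4⟩ := ih N' hlt hN'pos S T hST
      refine ⟨N1, N2 * Nat.gcd N S, ?_, ?_, h3, ?_⟩
      · conv_lhs => rw [hN', h1]
        ring
      · exact Nat.Coprime.mul_right h2 (Nat.Coprime.coprime_dvd_right hgdvdS h3)
      · exact (Nat.Coprime.mul_right h4.symm (Nat.Coprime.coprime_dvd_left hgdvdS hST).symm).symm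

theorem statement1 (s t n m : ℤ) (hs : 0 < s) (ht : 0 < t) (hst : IsCoprime s t)
    (hn : 0 < n) (hns : n < s) (hm : 0 < m) (hmt : m < t) (N : ℕ) (hN : 0 < N) :
    ∑ k ∈ Finset.range N,
      (Complex.exp (Real.pi * Complex.I * ((2 * s * t * k - n * t - m * s : ℤ) : ℂ) ^ 2
          / (2 * s * t * N))
        - Complex.exp (Real.pi * Complex.I * ((2 * s * t * k + n * t - m * s : ℤ) : ℂ) ^ 2
          / (2 * s * t * N))) = 0 := by
  haveI : NeZero N := ⟨hN.ne'⟩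
  set f : ℤ → ℂ := fun A =>
    Complex.exp ((Real.pi : ℂ) * Complex.I * (A : ℂ) ^ 2 / (2 * (s : ℂ) * t * N)) with hfdef
  -- the two exponentials agree once the squares agree mod 4stN
  have hexp : ∀ A B : ℤ, (4 * s * t * (N : ℤ)) ∣ A ^ 2 - B ^ 2 → f A = f B := by
    intro A B hAB
    obtain ⟨q, hq⟩ := hAB
    have h2 : (A : ℂ) ^ 2 = (B : ℂ) ^ 2 + 4 * s * t * N * q := by
      have := congrArg (fun r : ℤ => (r : ℂ)) hq
      push_cast at this
      linear_combination this
    have h1s : (s : ℂ) ≠ 0 := Int.cast_ne_zero.mpr hs.ne'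
    have h1t : (t : ℂ) ≠ 0 := Int.cast_ne_zero.mpr ht.ne'
    have h1N : (N : ℂ) ≠ 0 := Nat.cast_ne_zero.mpr hN.ne'
    have harg : (Real.pi : ℂ) * Complex.I * (A : ℂ) ^ 2 / (2 * (s : ℂ) * t * N)
        = (Real.pi : ℂ) * Complex.I * (B : ℂ) ^ 2 / (2 * (s : ℂ) * t * N)
          + (q : ℂ) * (2 * (Real.pi : ℂ) * Complex.I) := by
      field_simp
      linear_combination h2
    show Complex.exp _ = Complex.exp _
    rw [harg, Complex.exp_add, Complex.exp_int_mul_two_pi_mul_I, mul_one]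
  -- split N
  have hST : Nat.Coprime s.natAbs t.natAbs := Int.isCoprime_iff_gcd_eq_one.mp hst
  obtain ⟨N1, N2, hN12, cop12, cop1S, cop2T⟩ := split_coprime N hN s.natAbs t.natAbs hST
  have hNZ : (N : ℤ) = (N1 : ℤ) * N2 := by exact_mod_cast congrArg Nat.cast hN12
  have copS1 : IsCoprime s (N1 : ℤ) := by
    rw [Int.isCoprime_iff_gcd_eq_one]
    simpa [Int.gcd, Nat.coprime_comm] using cop1S.symm
  have copT2 : IsCoprime t (N2 : ℤ) := by
    rw [Int.isCoprime_iff_gcd_eq_one]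
    simpa [Int.gcd, Nat.coprime_comm] using cop2T.symm
  have copZ12 : IsCoprime (N1 : ℤ) (N2 : ℤ) := by
    rw [Int.isCoprime_iff_gcd_eq_one]
    simpa [Int.gcd] using cop12
  obtain ⟨u1, v1, huv1⟩ := copS1
  obtain ⟨u2, v2, huv2⟩ := copT2
  obtain ⟨x, y, hxy⟩ := copZ12
  set w : ℤ := 1 - 2 * (x * N1) with hwdef
  set c : ℤ := -(u1 * n) * (y * N2) + (u2 * m) * (x * N1) with hcdef
  -- w is coprime to N
  have hw1 : IsCoprime w (N1 : ℤ) := by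
    have h : w = 1 + (N1 : ℤ) * (-(2 * x)) := by rw [hwdef]; ring
    rw [h]
    exact (isCoprime_one_left).add_mul_left_left _
  have hw2 : IsCoprime w (N2 : ℤ) := by
    have h : w = -1 + (N2 : ℤ) * (2 * y) := by rw [hwdef]; linear_combination (-2) * hxy
    rw [h]
    exact ((isCoprime_one_left).neg_left).add_mul_left_left _
  have hwN : IsCoprime w (N : ℤ) := by
    rw [hNZ]; exact hw1.mul_right hw2
  obtain ⟨p, p', hpp'⟩ := hwN
  have hwu : IsUnit ((w : ℤ) : ZMod N) := by
    apply IsUnit.of_mul_eq_one ((p : ℤ) : ZMod N)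
    have : (((w * p + p' * N : ℤ)) : ZMod N) = ((1 : ℤ) : ZMod N) := by
      rw [show w * p + p' * N = p * w + p' * N by ring, hpp']
    push_cast [ZMod.natCast_self] at this
    simpa using this
  -- the bijection z ↦ w z + c on ZMod N
  let φ : ZMod N ≃ ZMod N := (Units.mulLeft hwu.unit).trans (Equiv.addRight ((c : ℤ) : ZMod N))
  have hφ : ∀ z : ZMod N, φ z = ((w : ℤ) : ZMod N) * z + ((c : ℤ) : ZMod N) := by
    intro z
    simp [φ, Units.mulLeft, IsUnit.unit_spec]
  -- resum over ZMod N
  have hR : ∀ F : ℕ → ℂ, ∑ k ∈ Finset.range N, F k = ∑ z : ZMod N, F z.val := by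
    intro F
    refine Finset.sum_nbij' (fun k => (k : ZMod N)) (fun z => z.val) ?_ ?_ ?_ ?_ ?_
    · intro a _; exact Finset.mem_univ _
    · intro z _; exact Finset.mem_range.mpr (ZMod.val_lt z)
    · intro a ha; exact ZMod.val_cast_of_lt (Finset.mem_range.mp ha)
    · intro z _; exact ZMod.natCast_rightInverse z
    · intro a ha; rw [ZMod.val_cast_of_lt (Finset.mem_range.mp ha)]
  show ∑ k ∈ Finset.range N,
      (f (2 * s * t * (k : ℤ) - n * t - m * s) - f (2 * s * t * (k : ℤ) + n * t - m * s)) = 0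
  rw [hR (fun k => f (2 * s * t * (k : ℤ) - n * t - m * s)
      - f (2 * s * t * (k : ℤ) + n * t - m * s))]
  rw [Finset.sum_sub_distrib, sub_eq_zero]
  refine Fintype.sum_equiv φ _ _ ?_
  intro z
  set k : ℤ := (z.val : ℤ) with hkdef
  set j : ℤ := ((φ z).val : ℤ) with hjdef
  apply hexp
  -- j ≡ w k + c  (mod N)
  have hdvdN : (N : ℤ) ∣ j - (w * k + c) := by
    rw [← ZMod.intCast_zmod_eq_zero_iff_dvd]
    have hjz : ((j : ℤ) : ZMod N) = φ z := by
      rw [hjdef]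
      push_cast
      exact ZMod.natCast_rightInverse (φ z)
    have hkz : ((k : ℤ) : ZMod N) = z := by
      rw [hkdef, Int.cast_natCast]
      exact ZMod.natCast_rightInverse z
    push_cast
    rw [hjz, hkz, hφ z]
    push_cast
    ring
  obtain ⟨q, hq⟩ := hdvdN
  rw [hNZ] at hq
  have d1 : (N1 : ℤ) ∣ s * (k - j) - n := by
    refine ⟨2 * s * x * k - n * x - v1 * n * y * N2 - s * u2 * m * x - s * N2 * q, ?_⟩
    rw [hwdef, hcdef] at hq
    linear_combination (-s) * hq + (n * y * (N2 : ℤ)) * huv1 + n * hxy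
  have d2 : (N2 : ℤ) ∣ t * (k + j) - m := by
    refine ⟨2 * t * k * y - t * u1 * n * y - t * u2 * m * y - v2 * m + t * N1 * q, ?_⟩
    rw [hwdef, hcdef] at hq
    linear_combination t * hq + (t * u2 * m - 2 * t * k) * hxy + m * huv2
  have dN : (N : ℤ) ∣ (s * (k - j) - n) * (t * (k + j) - m) := by
    rw [hNZ]
    exact mul_dvd_mul d1 d2
  obtain ⟨r, hr⟩ := dN
  exact ⟨r, by linear_combination (4 * s * t) * hr⟩
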